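/- Distributions with the same mean and same coefficient of variation can give different speedups: let U₁, U₂ be i.i.d. uniform on [0,2] and V₁, V₂ be i.i.d. Erlang with shape 3 and rate 3 (density (27/2)x²e^{−3x}); both distributions have mean 1 and coefficient of variation 1/√3, but E[min(U₁,U₂)] = 2/3 while E[min(V₁,V₂)] = ∫₀^∞ e^{−6x}(1 + 3x + 9x²/2)² dx > 2/3, so the speedup for the uniform pair is strictly larger. -/

import Mathlib

open MeasureTheory ProbabilityTheory Real Set
open scoped ENNReal NNReal

lemma iInf_fin_two (g : Fin 2 → ℝ) : (⨅ i, g i) = min (g 0) (g 1) := by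
  apply le_antisymm
  · exact le_min (ciInf_le (Set.finite_range g).bddBelow 0)
      (ciInf_le (Set.finite_range g).bddBelow 1)
  · refine le_ciInf (fun i => ?_)
    fin_cases i
    · exact min_le_left _ _
    · exact min_le_right _ _

noncomputable def densR (x : ℝ) : ℝ := if 0 ≤ x then (27 / 2) * x ^ 2 * Real.exp (-(3 * x)) else 0

lemma densR_nonneg (x : ℝ) : 0 ≤ densR x := by
  unfold densR; split <;> positivity

lemma densR_meas : Measurable densR := by
  unfold densR
  exact Measurable.ite measurableSet_Ici (by fun_prop) measurable_const

lemma densR_zero_of_nonpos {x : ℝ} (hx : x ≤ 0) : densR x = 0 := by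
  unfold densR
  rcases lt_or_eq_of_le hx with h | h
  · rw [if_neg (not_le.mpr h)]
  · subst h; simp

noncomputable def νE : Measure ℝ := volume.withDensity (fun x => ENNReal.ofReal (densR x))

lemma erlang_int (g : ℝ → ℝ) :
    ∫ x, g x ∂νE = ∫ x in Ioi (0:ℝ), (27 / 2) * x ^ 2 * Real.exp (-(3 * x)) * g x := by
  have h1 : νE = volume.withDensity (fun x => ((fun x => Real.toNNReal (densR x)) x : ℝ≥0∞)) := rfl
  rw [h1, integral_withDensity_eq_integral_smul (densR_meas.real_toNNReal) g]
  have h2 : (fun x => Real.toNNReal (densR x) • g x) = fun x => densR x * g x := by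
    funext x
    rw [NNReal.smul_def, Real.coe_toNNReal _ (densR_nonneg x), smul_eq_mul]
  rw [h2]
  rw [← setIntegral_eq_integral_of_forall_compl_eq_zero (s := Ioi (0:ℝ))
    (fun x hx => by rw [densR_zero_of_nonpos (not_lt.mp hx), zero_mul])]
  refine setIntegral_congr_fun measurableSet_Ioi (fun x hx => ?_)
  unfold densR
  rw [if_pos (le_of_lt hx)]

lemma intOn_pow_exp' (n : ℕ) {r : ℝ} (hr : 0 < r) {a : ℝ} (ha : 0 ≤ a) :
    IntegrableOn (fun x => x ^ n * Real.exp (-(r * x))) (Ioi a) := by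
  have h0 : IntegrableOn (fun x : ℝ => x ^ (n:ℝ) * Real.exp (-r * x ^ (1:ℝ))) (Ioi 0) :=
    integrableOn_rpow_mul_exp_neg_mul_rpow (lt_of_lt_of_le neg_one_lt_zero (Nat.cast_nonneg n)) one_pos hr
  have h1 : IntegrableOn (fun x => x ^ n * Real.exp (-(r * x))) (Ioi 0) := by
    refine h0.congr_fun (fun x hx => ?_) measurableSet_Ioi
    beta_reduce
    rw [Real.rpow_natCast, Real.rpow_one, neg_mul]
  exact h1.mono_set (Ioi_subset_Ioi ha)

lemma tend3 (n : ℕ) : Filter.Tendsto (fun y : ℝ => y ^ n * Real.exp (-(3 * y)))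
    Filter.atTop (nhds 0) := by
  have h := tendsto_pow_mul_exp_neg_atTop_nhds_zero n
  have h3 : Filter.Tendsto (fun y : ℝ => 3 * y) Filter.atTop Filter.atTop :=
    Filter.Tendsto.const_mul_atTop (by norm_num) Filter.tendsto_id
  have h4 := h.comp h3
  have h5 := h4.const_mul ((1:ℝ) / 3 ^ n)
  rw [mul_zero] at h5
  refine Filter.Tendsto.congr (fun y => ?_) h5
  simp only [Function.comp]
  field_simp [mul_pow]
  ring

lemma erlang_tail {t : ℝ} (ht : 0 ≤ t) :
    νE (Ioi t) = ENNReal.ofReal (Real.exp (-(3 * t)) * (1 + 3 * t + 9 * t ^ 2 / 2)) := by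
  have hint : IntegrableOn (fun x => (27/2) * x ^ 2 * Real.exp (-(3 * x))) (Ioi t) :=
    IntegrableOn.congr_fun ((intOn_pow_exp' 2 (by norm_num : (0:ℝ) < 3) ht).const_mul (27/2))
      (fun x _ => by ring) measurableSet_Ioi
  have hdens_int : IntegrableOn densR (Ioi t) :=
    hint.congr_fun (fun x hx => (if_pos (le_of_lt (lt_of_le_of_lt ht hx))).symm) measurableSet_Ioi
  have hd : ∀ x : ℝ, HasDerivAt (fun y => -(Real.exp (-(3 * y)) * (1 + 3 * y + 9 * y ^ 2 / 2)))
      ((27/2) * x ^ 2 * Real.exp (-(3 * x))) x := by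
    intro x
    have hl : HasDerivAt (fun y : ℝ => -(3 * y)) (-3) x := by
      have h := ((hasDerivAt_id' (x := x)).const_mul (3:ℝ)).neg
      rw [mul_one] at h
      exact h
    have he : HasDerivAt (fun y : ℝ => Real.exp (-(3 * y))) (Real.exp (-(3 * x)) * (-3)) x :=
      hl.exp
    have hp : HasDerivAt (fun y : ℝ => 1 + 3 * y + 9 * y ^ 2 / 2) (3 + 9 * x) x := by
      have h2 : HasDerivAt (fun y : ℝ => y ^ 2) (2 * x) x := by simpa using hasDerivAt_pow 2 x
      have h := (((hasDerivAt_id' (x := x)).const_mul (3:ℝ)).const_add (1:ℝ)).add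
        ((h2.const_mul (9:ℝ)).div_const 2)
      exact h.congr_deriv (by ring)
    have h := (he.mul hp).neg
    exact h.congr_deriv (by ring)
  have hF : Filter.Tendsto (fun y : ℝ => -(Real.exp (-(3 * y)) * (1 + 3 * y + 9 * y ^ 2 / 2)))
      Filter.atTop (nhds 0) := by
    have h := (((tend3 0).add ((tend3 1).const_mul 3)).add ((tend3 2).const_mul (9/2))).neg
    norm_num at h
    refine Filter.Tendsto.congr (fun y => ?_) h
    ring
  have key := integral_Ioi_of_hasDerivAt_of_tendsto' (fun x _ => hd x) hint hF
  have hval : ∫ x in Ioi t, densR x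
      = Real.exp (-(3 * t)) * (1 + 3 * t + 9 * t ^ 2 / 2) := by
    have heq : EqOn densR (fun x => (27/2) * x ^ 2 * Real.exp (-(3 * x))) (Ioi t) := by
      intro x hx
      unfold densR
      rw [if_pos (le_of_lt (lt_of_le_of_lt ht hx))]
    rw [setIntegral_congr_fun measurableSet_Ioi heq, key]
    ring
  rw [νE, withDensity_apply _ measurableSet_Ioi,
    ← ofReal_integral_eq_lintegral_ofReal hdens_int
      (Filter.Eventually.of_forall (fun x => densR_nonneg x)), hval]

lemma mom_pow_exp' (n : ℕ) {r : ℝ} (hr : 0 < r) :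
    ∫ x in Ioi (0:ℝ), x ^ n * Real.exp (-(r * x)) = (Nat.factorial n : ℝ) / r ^ (n + 1) := by
  have := Real.integral_rpow_mul_exp_neg_mul_Ioi (a := (n:ℝ) + 1) (r := r) (by positivity) hr
  rw [show ((n:ℝ) + 1 - 1) = (n:ℝ) by ring] at this
  have heq : ∫ x in Ioi (0:ℝ), x ^ n * Real.exp (-(r * x))
      = ∫ x in Ioi (0:ℝ), x ^ ((n:ℝ)) * Real.exp (-(r * x)) := by
    refine setIntegral_congr_fun measurableSet_Ioi (fun x hx => ?_)
    rw [Real.rpow_natCast]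
  rw [heq, this, Real.Gamma_nat_eq_factorial,
    show ((n:ℝ) + 1) = ((n + 1 : ℕ) : ℝ) by push_cast; ring,
    Real.rpow_natCast, div_pow, one_pow]
  field_simp

lemma erlang_mean : ∫ x, x ∂νE = 1 := by
  rw [erlang_int (fun x => x)]
  rw [setIntegral_congr_fun measurableSet_Ioi
    (fun x _ => by ring : EqOn _ (fun x => (27/2) * (x ^ 3 * Real.exp (-(3 * x)))) (Ioi 0)),
    integral_const_mul, mom_pow_exp' 3 (by norm_num)]
  norm_num [Nat.factorial]

lemma erlang_var : ∫ x, (x - 1) ^ 2 ∂νE = 1 / 3 := by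
  rw [erlang_int (fun x => (x - 1) ^ 2)]
  have J : ∀ (n : ℕ) (c : ℝ), IntegrableOn (fun x => c * (x ^ n * Real.exp (-(3 * x)))) (Ioi 0) :=
    fun n c => (intOn_pow_exp' n (by norm_num) le_rfl).const_mul c
  have A : ∀ {f g : ℝ → ℝ}, IntegrableOn f (Ioi (0:ℝ)) → IntegrableOn g (Ioi (0:ℝ)) →
      IntegrableOn (fun x => f x + g x) (Ioi (0:ℝ)) := fun hf hg => hf.add hg
  rw [setIntegral_congr_fun measurableSet_Ioi
    (fun x _ => by ring : EqOn _ (fun x => (27/2) * (x ^ 4 * Real.exp (-(3 * x)))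
      + ((-27) * (x ^ 3 * Real.exp (-(3 * x))) + (27/2) * (x ^ 2 * Real.exp (-(3 * x))))) (Ioi 0)),
    integral_add (J 4 (27/2)) (A (J 3 (-27)) (J 2 (27/2))),
    integral_add (J 3 (-27)) (J 2 (27/2)),
    integral_const_mul, integral_const_mul, integral_const_mul,
    mom_pow_exp' 4 (by norm_num), mom_pow_exp' 3 (by norm_num), mom_pow_exp' 2 (by norm_num)]
  norm_num [Nat.factorial]

lemma key_integral :
    ∫ x in Ioi (0:ℝ), Real.exp (-(6 * x)) * (1 + 3 * x + 9 * x ^ 2 / 2) ^ 2 = 11 / 16 := by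
  have J : ∀ (n : ℕ) (c : ℝ), IntegrableOn (fun x => c * (x ^ n * Real.exp (-(6 * x)))) (Ioi 0) :=
    fun n c => (intOn_pow_exp' n (by norm_num) le_rfl).const_mul c
  have A : ∀ {f g : ℝ → ℝ}, IntegrableOn f (Ioi (0:ℝ)) → IntegrableOn g (Ioi (0:ℝ)) →
      IntegrableOn (fun x => f x + g x) (Ioi (0:ℝ)) := fun hf hg => hf.add hg
  rw [setIntegral_congr_fun measurableSet_Ioi
    (fun x _ => by ring : EqOn _ (fun x => 1 * (x ^ 0 * Real.exp (-(6 * x)))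
      + (6 * (x ^ 1 * Real.exp (-(6 * x)))
      + (18 * (x ^ 2 * Real.exp (-(6 * x)))
      + (27 * (x ^ 3 * Real.exp (-(6 * x)))
      + (81/4) * (x ^ 4 * Real.exp (-(6 * x))))))) (Ioi 0)),
    integral_add (J 0 1) (A (J 1 6) (A (J 2 18) (A (J 3 27) (J 4 (81/4))))),
    integral_add (J 1 6) (A (J 2 18) (A (J 3 27) (J 4 (81/4)))),
    integral_add (J 2 18) (A (J 3 27) (J 4 (81/4))),
    integral_add (J 3 27) (J 4 (81/4)),
    integral_const_mul, integral_const_mul, integral_const_mul, integral_const_mul,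
    integral_const_mul, mom_pow_exp' 0 (by norm_num), mom_pow_exp' 1 (by norm_num),
    mom_pow_exp' 2 (by norm_num), mom_pow_exp' 3 (by norm_num), mom_pow_exp' 4 (by norm_num)]
  norm_num [Nat.factorial]

noncomputable def νU : Measure ℝ := ENNReal.ofReal (1 / 2) • volume.restrict (Icc (0:ℝ) 2)

lemma unif_int (g : ℝ → ℝ) : ∫ x, g x ∂νU = (1 / 2) * ∫ x in Icc (0:ℝ) 2, g x := by
  rw [νU, integral_smul_measure, ENNReal.toReal_ofReal (by norm_num), smul_eq_mul]

lemma unif_mean : ∫ x, x ∂νU = 1 := by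
  rw [unif_int (fun x => x), integral_Icc_eq_integral_Ioc,
    ← intervalIntegral.integral_of_le (by norm_num : (0:ℝ) ≤ 2), integral_id]
  norm_num

lemma unif_var : ∫ x, (x - 1) ^ 2 ∂νU = 1 / 3 := by
  rw [unif_int (fun x => (x - 1) ^ 2), integral_Icc_eq_integral_Ioc,
    ← intervalIntegral.integral_of_le (by norm_num : (0:ℝ) ≤ 2),
    intervalIntegral.integral_comp_sub_right (fun u => u ^ 2) 1, integral_pow]
  norm_num

lemma unif_tail {t : ℝ} (ht : 0 ≤ t) : νU (Ioi t) = ENNReal.ofReal ((2 - t) / 2) := by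
  have hset : Ioi t ∩ Icc (0:ℝ) 2 = Ioc t 2 := by
    ext x
    constructor
    · rintro ⟨h1, _, h3⟩; exact ⟨h1, h3⟩
    · rintro ⟨h1, h2⟩; exact ⟨h1, le_of_lt (lt_of_le_of_lt ht h1), h2⟩
  rw [νU, Measure.smul_apply, Measure.restrict_apply measurableSet_Ioi, hset, Real.volume_Ioc,
    smul_eq_mul, ← ENNReal.ofReal_mul (by norm_num)]
  congr 1
  ring

lemma unif_integrable_id : Integrable (fun x : ℝ => x) νU := by
  rw [νU]
  refine Integrable.smul_measure ?_ ENNReal.ofReal_ne_top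
  exact (continuous_id.integrableOn_Icc : IntegrableOn (fun x : ℝ => x) (Icc 0 2))

lemma erlang_integrable_id : Integrable (fun x : ℝ => x) νE := by
  rw [νE, integrable_withDensity_iff (densR_meas.ennreal_ofReal)
    (Filter.Eventually.of_forall (fun x => ENNReal.ofReal_lt_top))]
  have h : (fun x : ℝ => x * (ENNReal.ofReal (densR x)).toReal)
      = Set.indicator (Ioi 0) (fun x => x * densR x) := by
    funext x
    rw [ENNReal.toReal_ofReal (densR_nonneg x)]
    by_cases hx : x ∈ Ioi (0:ℝ)
    · rw [Set.indicator_of_mem hx]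
    · rw [Set.indicator_of_notMem hx, densR_zero_of_nonpos (not_lt.mp hx), mul_zero]
  rw [h, integrable_indicator_iff measurableSet_Ioi]
  refine IntegrableOn.congr_fun ((intOn_pow_exp' 3 (by norm_num : (0:ℝ) < 3) le_rfl).const_mul
    (27/2)) (fun x hx => ?_) measurableSet_Ioi
  unfold densR
  rw [if_pos (le_of_lt hx)]
  ring

lemma unif_min_integral : ∫ t in Ioi (0:ℝ), (νU (Ioi t) * νU (Ioi t)).toReal = 2 / 3 := by
  have h1 : EqOn (fun t => (νU (Ioi t) * νU (Ioi t)).toReal) (fun t => ((2 - t) / 2) ^ 2)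
      (Ioc (0:ℝ) 2) := by
    intro t ht
    have ha : (0:ℝ) ≤ (2 - t) / 2 := by
      have := ht.2; linarith
    simp only
    rw [unif_tail (le_of_lt ht.1), ← ENNReal.ofReal_mul ha,
      ENNReal.toReal_ofReal (mul_nonneg ha ha)]
    ring
  have h2 : EqOn (fun t => (νU (Ioi t) * νU (Ioi t)).toReal) (fun _ => (0:ℝ)) (Ioi (2:ℝ)) := by
    intro t ht
    simp only
    rw [unif_tail (by linarith [mem_Ioi.mp ht] : (0:ℝ) ≤ t),
      ENNReal.ofReal_of_nonpos (by have := mem_Ioi.mp ht; linarith : (2 - t) / 2 ≤ 0)]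
    simp
  have hdisj : Disjoint (Ioc (0:ℝ) 2) (Ioi (2:ℝ)) := by
    rw [Set.disjoint_left]
    rintro x ⟨_, hx2⟩ hx3
    exact absurd hx2 (not_le.mpr hx3)
  have hcont : Continuous (fun t : ℝ => ((2 - t) / 2) ^ 2) := by fun_prop
  have hint1 : IntegrableOn (fun t => (νU (Ioi t) * νU (Ioi t)).toReal) (Ioc (0:ℝ) 2) :=
    IntegrableOn.congr_fun (hcont.integrableOn_Ioc) h1.symm measurableSet_Ioc
  have hint2 : IntegrableOn (fun t => (νU (Ioi t) * νU (Ioi t)).toReal) (Ioi (2:ℝ)) :=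
    IntegrableOn.congr_fun (integrableOn_zero) h2.symm measurableSet_Ioi
  rw [show Ioi (0:ℝ) = Ioc (0:ℝ) 2 ∪ Ioi 2 from (Ioc_union_Ioi_eq_Ioi (by norm_num)).symm,
    setIntegral_union hdisj measurableSet_Ioi hint1 hint2,
    setIntegral_congr_fun measurableSet_Ioc h1, setIntegral_congr_fun measurableSet_Ioi h2,
    integral_zero, add_zero, ← intervalIntegral.integral_of_le (by norm_num : (0:ℝ) ≤ 2),
    intervalIntegral.integral_comp_sub_left (fun u => (u / 2) ^ 2) 2]
  norm_num [div_pow, intervalIntegral.integral_div, integral_pow]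

lemma erlang_min_integral : ∫ t in Ioi (0:ℝ), (νE (Ioi t) * νE (Ioi t)).toReal
    = ∫ x in Ioi (0:ℝ), Real.exp (-(6 * x)) * (1 + 3 * x + 9 * x ^ 2 / 2) ^ 2 := by
  refine setIntegral_congr_fun measurableSet_Ioi (fun t ht => ?_)
  have ht' : (0:ℝ) < t := ht
  have hP : (0:ℝ) ≤ 1 + 3 * t + 9 * t ^ 2 / 2 := by nlinarith
  have hS : (0:ℝ) ≤ Real.exp (-(3 * t)) * (1 + 3 * t + 9 * t ^ 2 / 2) :=
    mul_nonneg (Real.exp_nonneg _) hP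
  rw [erlang_tail (le_of_lt ht'), ← ENNReal.ofReal_mul hS,
    ENNReal.toReal_ofReal (mul_nonneg hS hS)]
  have he : Real.exp (-(3 * t)) * Real.exp (-(3 * t)) = Real.exp (-(6 * t)) := by
    rw [← Real.exp_add]; congr 1; ring
  calc Real.exp (-(3 * t)) * (1 + 3 * t + 9 * t ^ 2 / 2)
        * (Real.exp (-(3 * t)) * (1 + 3 * t + 9 * t ^ 2 / 2))
      = (Real.exp (-(3 * t)) * Real.exp (-(3 * t))) * (1 + 3 * t + 9 * t ^ 2 / 2) ^ 2 := by ring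
    _ = Real.exp (-(6 * t)) * (1 + 3 * t + 9 * t ^ 2 / 2) ^ 2 := by rw [he]


theorem same_cv_different_speedup {Ω : Type*} [MeasurableSpace Ω] (μ : Measure Ω)
    [IsProbabilityMeasure μ]
    (U V : Fin 2 → Ω → ℝ)
    (hU : ∀ i, Measurable (U i)) (hV : ∀ i, Measurable (V i))
    (hindepU : iIndepFun U μ)
    (hindepV : iIndepFun V μ)
    (hdistU : ∀ i, μ.map (U i) = ENNReal.ofReal (1 / 2) • volume.restrict (Icc (0:ℝ) 2))
    (hdistV : ∀ i, μ.map (V i) = volume.withDensity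
      (fun x => ENNReal.ofReal (if 0 ≤ x then (27 / 2) * x ^ 2 * Real.exp (-(3 * x)) else 0))) :
    (∫ ω, U 0 ω ∂μ) = 1 ∧ (∫ ω, V 0 ω ∂μ) = 1 ∧
    (∫ ω, (U 0 ω - 1) ^ 2 ∂μ) = 1 / 3 ∧ (∫ ω, (V 0 ω - 1) ^ 2 ∂μ) = 1 / 3 ∧
    Real.sqrt (∫ ω, (U 0 ω - 1) ^ 2 ∂μ) / (∫ ω, U 0 ω ∂μ) = 1 / Real.sqrt 3 ∧
    Real.sqrt (∫ ω, (V 0 ω - 1) ^ 2 ∂μ) / (∫ ω, V 0 ω ∂μ) = 1 / Real.sqrt 3 ∧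
    (∫ ω, (⨅ i, U i ω) ∂μ) = 2 / 3 ∧
    (∫ ω, (⨅ i, V i ω) ∂μ)
      = (∫ x in Ioi (0:ℝ), Real.exp (-(6 * x)) * (1 + 3 * x + 9 * x ^ 2 / 2) ^ 2) ∧
    2 / 3 < (∫ ω, (⨅ i, V i ω) ∂μ) ∧
    (∫ ω, V 0 ω ∂μ) / (∫ ω, (⨅ i, V i ω) ∂μ)
      < (∫ ω, U 0 ω ∂μ) / (∫ ω, (⨅ i, U i ω) ∂μ) := by
  have hmapU : ∀ i, μ.map (U i) = νU := fun i => hdistU i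
  have hmapV : ∀ i, μ.map (V i) = νE := fun i => by rw [hdistV i]; rfl
  -- means
  have hUmean : (∫ ω, U 0 ω ∂μ) = 1 := by
    have h := integral_map (μ := μ) (φ := U 0) (hU 0).aemeasurable
      (f := fun x : ℝ => x) measurable_id.aestronglyMeasurable
    rw [hmapU 0] at h
    rw [← h]; exact unif_mean
  have hVmean : (∫ ω, V 0 ω ∂μ) = 1 := by
    have h := integral_map (μ := μ) (φ := V 0) (hV 0).aemeasurable
      (f := fun x : ℝ => x) measurable_id.aestronglyMeasurable
    rw [hmapV 0] at h
    rw [← h]; exact erlang_mean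
  -- variances
  have hgm : Measurable (fun x : ℝ => (x - 1) ^ 2) := by fun_prop
  have hUvar : (∫ ω, (U 0 ω - 1) ^ 2 ∂μ) = 1 / 3 := by
    have h := integral_map (μ := μ) (φ := U 0) (hU 0).aemeasurable
      (f := fun x : ℝ => (x - 1) ^ 2) hgm.aestronglyMeasurable
    rw [hmapU 0] at h
    rw [← h]; exact unif_var
  have hVvar : (∫ ω, (V 0 ω - 1) ^ 2 ∂μ) = 1 / 3 := by
    have h := integral_map (μ := μ) (φ := V 0) (hV 0).aemeasurable
      (f := fun x : ℝ => (x - 1) ^ 2) hgm.aestronglyMeasurable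
    rw [hmapV 0] at h
    rw [← h]; exact erlang_var
  -- a.e. nonnegativity
  have hUnn : ∀ i, ∀ᵐ ω ∂μ, 0 ≤ U i ω := by
    intro i
    rw [ae_iff]
    have hset : {ω | ¬ 0 ≤ U i ω} = U i ⁻¹' (Iio 0) := by ext ω; simp [not_le]
    rw [hset, ← Measure.map_apply (hU i) measurableSet_Iio, hmapU i, νU, Measure.smul_apply,
      Measure.restrict_apply measurableSet_Iio,
      show Iio (0:ℝ) ∩ Icc 0 2 = ∅ by
        ext x; simp only [mem_inter_iff, mem_Iio, mem_Icc, mem_empty_iff_false, iff_false]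
        rintro ⟨h1, h2, _⟩; linarith]
    simp
  have hVnn : ∀ i, ∀ᵐ ω ∂μ, 0 ≤ V i ω := by
    intro i
    rw [ae_iff]
    have hset : {ω | ¬ 0 ≤ V i ω} = V i ⁻¹' (Iio 0) := by ext ω; simp [not_le]
    rw [hset, ← Measure.map_apply (hV i) measurableSet_Iio, hmapV i, νE,
      withDensity_apply _ measurableSet_Iio,
      setLIntegral_congr_fun measurableSet_Iio (
        (fun x (hx : x ∈ Iio (0:ℝ)) => by
          rw [densR_zero_of_nonpos (le_of_lt hx), ENNReal.ofReal_zero])),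
      lintegral_zero]
  -- integrability
  have hUint : Integrable (U 0) μ := by
    have h := (integrable_map_measure measurable_id.aestronglyMeasurable
      (hU 0).aemeasurable).mp (by rw [hmapU 0]; exact unif_integrable_id)
    exact h
  have hVint : Integrable (V 0) μ := by
    have h := (integrable_map_measure measurable_id.aestronglyMeasurable
      (hV 0).aemeasurable).mp (by rw [hmapV 0]; exact erlang_integrable_id)
    exact h
  have hminUint : Integrable (fun ω => min (U 0 ω) (U 1 ω)) μ := by
    refine Integrable.mono hUint ((hU 0).min (hU 1)).aestronglyMeasurable ?_
    filter_upwards [hUnn 0, hUnn 1] with ω h0 h1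
    rw [Real.norm_eq_abs, Real.norm_eq_abs, abs_of_nonneg (le_min h0 h1), abs_of_nonneg h0]
    exact min_le_left _ _
  have hminVint : Integrable (fun ω => min (V 0 ω) (V 1 ω)) μ := by
    refine Integrable.mono hVint ((hV 0).min (hV 1)).aestronglyMeasurable ?_
    filter_upwards [hVnn 0, hVnn 1] with ω h0 h1
    rw [Real.norm_eq_abs, Real.norm_eq_abs, abs_of_nonneg (le_min h0 h1), abs_of_nonneg h0]
    exact min_le_left _ _
  have hminUnn : 0 ≤ᵐ[μ] (fun ω => min (U 0 ω) (U 1 ω)) := by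
    filter_upwards [hUnn 0, hUnn 1] with ω h0 h1
    exact le_min h0 h1
  have hminVnn : 0 ≤ᵐ[μ] (fun ω => min (V 0 ω) (V 1 ω)) := by
    filter_upwards [hVnn 0, hVnn 1] with ω h0 h1
    exact le_min h0 h1
  -- tails
  have htailU : ∀ t : ℝ, t ∈ Ioi (0:ℝ) →
      μ {a | t < min (U 0 a) (U 1 a)} = νU (Ioi t) * νU (Ioi t) := by
    intro t _
    have hset : {a | t < min (U 0 a) (U 1 a)} = U 0 ⁻¹' (Ioi t) ∩ U 1 ⁻¹' (Ioi t) := by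
      ext a
      simp [lt_min_iff]
    rw [hset, (hindepU.indepFun (by decide : (0:Fin 2) ≠ 1)).measure_inter_preimage_eq_mul
        _ _ measurableSet_Ioi measurableSet_Ioi,
      ← Measure.map_apply (hU 0) measurableSet_Ioi, ← Measure.map_apply (hU 1) measurableSet_Ioi,
      hmapU 0, hmapU 1]
  have htailV : ∀ t : ℝ, t ∈ Ioi (0:ℝ) →
      μ {a | t < min (V 0 a) (V 1 a)} = νE (Ioi t) * νE (Ioi t) := by
    intro t _
    have hset : {a | t < min (V 0 a) (V 1 a)} = V 0 ⁻¹' (Ioi t) ∩ V 1 ⁻¹' (Ioi t) := by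
      ext a
      simp [lt_min_iff]
    rw [hset, (hindepV.indepFun (by decide : (0:Fin 2) ≠ 1)).measure_inter_preimage_eq_mul
        _ _ measurableSet_Ioi measurableSet_Ioi,
      ← Measure.map_apply (hV 0) measurableSet_Ioi, ← Measure.map_apply (hV 1) measurableSet_Ioi,
      hmapV 0, hmapV 1]
  -- expected minima
  have hEminU : (∫ ω, (⨅ i, U i ω) ∂μ) = 2 / 3 := by
    simp only [iInf_fin_two]
    rw [hminUint.integral_eq_integral_meas_lt hminUnn,
      setIntegral_congr_fun measurableSet_Ioi (fun t ht => by rw [measureReal_def, htailU t ht])]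
    exact unif_min_integral
  have hEminV : (∫ ω, (⨅ i, V i ω) ∂μ)
      = ∫ x in Ioi (0:ℝ), Real.exp (-(6 * x)) * (1 + 3 * x + 9 * x ^ 2 / 2) ^ 2 := by
    simp only [iInf_fin_two]
    rw [hminVint.integral_eq_integral_meas_lt hminVnn,
      setIntegral_congr_fun measurableSet_Ioi (fun t ht => by rw [measureReal_def, htailV t ht])]
    exact erlang_min_integral
  refine ⟨hUmean, hVmean, hUvar, hVvar, ?_, ?_, hEminU, hEminV, ?_, ?_⟩
  · rw [hUvar, hUmean, div_one, show (1/3 : ℝ) = (3:ℝ)⁻¹ by norm_num, Real.sqrt_inv, one_div]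
  · rw [hVvar, hVmean, div_one, show (1/3 : ℝ) = (3:ℝ)⁻¹ by norm_num, Real.sqrt_inv, one_div]
  · rw [hEminV, key_integral]; norm_num
  · rw [hEminV, key_integral, hUmean, hVmean, hEminU]; norm_num
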